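/- For 1 ≤ r ≤ m−1, the cyclic derivative descendant of the extended cyclic code with exponent set {j ∈ {0,…,2^m−2} : wt(j̄) ≤ r} (the Reed–Muller code RM(r,m)) is the extended cyclic code with exponent set {j ∈ {0,…,2^m−2} : wt(j̄) ≤ r−1} (the Reed–Muller code RM(r−1,m)). Equivalently, ∪_{s∈cr(S)} cc(P(s)) = {j : wt(j̄) ≤ r−1} where S = {j : wt(j̄) ≤ r}. -/

import Mathlib

/-- Hamming weight of the `m`-bit binary expansion of `s`. -/
def wtm (m s : ℕ) : ℕ := ((Finset.range m).filter fun j => s.testBit j).card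

/-- `Pset s`: the set of nonnegative integers whose binary expansion is
properly covered by that of `s`. -/
def Pset (s : ℕ) : Finset ℕ :=
  (Finset.range (s + 1)).filter fun k => k ||| s = s ∧ k ≠ s

/-- The cyclotomic coset `C_s` modulo `n = 2^m - 1`. -/
def cycCoset (n m s : ℕ) : Finset ℕ := (Finset.range m).image fun j => 2 ^ j * s % n

/-- `cc S`: union of all cyclotomic cosets meeting `S`. -/
def ccSet (n m : ℕ) (S : Finset ℕ) : Finset ℕ := S.biUnion (cycCoset n m)

/-- `cr S`: the set of coset representatives (minimal elements of the cosets) of `S`. -/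
def crSet (n m : ℕ) (S : Finset ℕ) : Finset ℕ :=
  (ccSet n m S).filter fun s => ∀ t ∈ cycCoset n m s, s ≤ t

/-- `S` is an exponent set: a set of residues mod `n` closed under doubling mod `n`. -/
def IsExpSet (n : ℕ) (S : Finset ℕ) : Prop :=
  (∀ j ∈ S, j < n) ∧ ∀ j ∈ S, 2 * j % n ∈ S

/-- The extended cyclic code of length `2^m` with exponent set `S`. -/
def extCyclicCode {F : Type*} [Field F] (n : ℕ) (S : Finset ℕ) : Set (F → F) :=
  { c | ∃ A : ℕ → F, (∀ j ∈ S, A (2 * j % n) = A j ^ 2) ∧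
      ∀ x : F, c x = ∑ j ∈ S, A j * x ^ j }

/-- The set of derivatives of the codewords of `C` in direction `β`. -/
def derivSet {F : Type*} [Field F] (β : F) (C : Set (F → F)) : Set (F → F) :=
  { d | ∃ c ∈ C, d = fun x => c (x + β) - c x }

/-- Minimum Hamming distance (= minimum weight) of a code. -/
noncomputable def minDist {F : Type*} [Field F] [Fintype F] [DecidableEq F]
    (C : Set (F → F)) : ℕ :=
  sInf { w | ∃ c ∈ C, c ≠ (0 : F → F) ∧ hammingNorm c = w }

namespace CDD

open Finset

/-! ### Bit arithmetic toolkit -/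

lemma sum_range_two_pow (m : ℕ) : ∑ b ∈ Finset.range m, 2 ^ b = 2 ^ m - 1 := by
  induction m with
  | zero => simp
  | succ m ih =>
    rw [Finset.sum_range_succ, ih, pow_succ]
    have := Nat.two_pow_pos m
    omega

/-- the bit support of `j` within `range m` -/
def bitsF (m j : ℕ) : Finset ℕ := (Finset.range m).filter fun i => j.testBit i

/-- sum of powers of two over a finset -/
def sig (T : Finset ℕ) : ℕ := ∑ b ∈ T, 2 ^ b

lemma sig_testBit {m : ℕ} {T : Finset ℕ} (hT : T ⊆ Finset.range m) (i : ℕ) :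
    (sig T).testBit i = decide (i ∈ T) := by
  induction m generalizing T i with
  | zero =>
    have : T = ∅ := Finset.subset_empty.mp (by simpa using hT)
    subst this; simp [sig]
  | succ m ih =>
    have hT' : T.erase m ⊆ Finset.range m := by
      intro x hx
      have hx1 := Finset.mem_of_mem_erase hx
      have hx2 := Finset.ne_of_mem_erase hx
      have := hT hx1
      simp only [Finset.mem_range] at this ⊢
      omega
    have hlt : sig (T.erase m) < 2 ^ m := by
      have h1 : sig (T.erase m) ≤ 2 ^ m - 1 := by
        rw [← sum_range_two_pow]
        exact Finset.sum_le_sum_of_subset hT'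
      have := Nat.two_pow_pos m
      omega
    by_cases hm : m ∈ T
    · have hTm : T = insert m (T.erase m) := (Finset.insert_erase hm).symm
      have hsig : sig T = 2 ^ m * 1 + sig (T.erase m) := by
        rw [hTm, sig, Finset.sum_insert (Finset.notMem_erase m T)]
        simp [sig]
      rw [hsig, Nat.testBit_two_pow_mul_add 1 hlt i]
      by_cases hi : i < m
      · rw [if_pos hi, ih hT' i]
        have : (i ∈ T.erase m) = (i ∈ T) := by
          simp [Finset.mem_erase]; intro h; omega
        simp [this]
      · rw [if_neg hi]
        by_cases hi2 : i = m
        · subst hi2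
          simp [Nat.sub_self, hm]
        · have : i - m ≠ 0 := by omega
          have h1 : Nat.testBit 1 (i - m) = false := by
            have : (1:ℕ) < 2 ^ (i - m) := by
              have : 1 ≤ i - m := by omega
              calc (1:ℕ) < 2 ^ 1 := by norm_num
              _ ≤ 2 ^ (i - m) := Nat.pow_le_pow_right (by norm_num) this
            exact Nat.testBit_lt_two_pow this
          rw [h1]
          have : i ∉ T := by
            intro h; have := hT h; simp only [Finset.mem_range] at this; omega
          simp [this]
    · have hTm : T.erase m = T := Finset.erase_eq_of_notMem hm
      rw [← hTm, ih hT' i]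

lemma sig_lt {m : ℕ} {T : Finset ℕ} (hT : T ⊆ Finset.range m) : sig T < 2 ^ m := by
  have h1 : sig T ≤ 2 ^ m - 1 := by
    rw [← sum_range_two_pow]; exact Finset.sum_le_sum_of_subset hT
  have := Nat.two_pow_pos m
  omega

lemma testBit_ge {m j i : ℕ} (hj : j < 2 ^ m) (hi : m ≤ i) : j.testBit i = false :=
  Nat.testBit_lt_two_pow (lt_of_lt_of_le hj (Nat.pow_le_pow_right (by norm_num) hi))

lemma sig_bitsF {m j : ℕ} (hj : j < 2 ^ m) : sig (bitsF m j) = j := by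
  apply Nat.eq_of_testBit_eq
  intro i
  rw [show bitsF m j = (Finset.range m).filter (fun i => j.testBit i) from rfl,
    sig_testBit (Finset.filter_subset _ _) i]
  by_cases hi : i < m
  · simp [bitsF, hi]
  · simp only [bitsF, Finset.mem_filter, Finset.mem_range]
    rw [testBit_ge hj (by omega)]
    simp [hi]

lemma bitsF_sig {m : ℕ} {T : Finset ℕ} (hT : T ⊆ Finset.range m) : bitsF m (sig T) = T := by
  ext i
  simp only [bitsF, Finset.mem_filter, Finset.mem_range, sig_testBit hT]
  constructor
  · rintro ⟨_, h⟩; simpa using h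
  · intro h; exact ⟨by simpa using Finset.mem_range.mp (hT h), by simpa using h⟩

lemma or_eq_iff {k j : ℕ} : k ||| j = j ↔ ∀ i, k.testBit i = true → j.testBit i = true := by
  constructor
  · intro h i hk
    have := congrArg (fun x => Nat.testBit x i) h
    simp only [Nat.testBit_or, hk, Bool.true_or] at this
    exact this.symm
  · intro h
    apply Nat.eq_of_testBit_eq
    intro i
    rw [Nat.testBit_or]
    cases hk : k.testBit i
    · simp
    · simp [h i hk]

lemma or_le {k j : ℕ} (h : k ||| j = j) : k ≤ j :=
  Nat.le_of_testBit (or_eq_iff.mp h)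

section Rot

variable {m : ℕ}

lemma rot_eq (hm : 0 < m) {j : ℕ} (hj : j < 2 ^ m - 1) :
    2 * j % (2 ^ m - 1) = 2 * (j % 2 ^ (m - 1)) + j / 2 ^ (m - 1) := by
  have h1 : 2 ^ m = 2 * 2 ^ (m - 1) := by
    conv_lhs => rw [show m = (m - 1) + 1 by omega]
    rw [pow_succ]; ring
  have hd := Nat.div_add_mod j (2 ^ (m - 1))
  have hm' : j % 2 ^ (m - 1) < 2 ^ (m - 1) := Nat.mod_lt _ (Nat.two_pow_pos _)
  have hb : j / 2 ^ (m - 1) < 2 :=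
    (Nat.div_lt_iff_lt_mul (Nat.two_pow_pos _)).mpr (by omega)
  have hcase : j / 2 ^ (m - 1) = 0 ∨ j / 2 ^ (m - 1) = 1 := by
    generalize j / 2 ^ (m - 1) = q at hb
    omega
  rcases hcase with h | h
  · rw [h] at hd ⊢
    have hjj : j = j % 2 ^ (m - 1) := by omega
    rw [← hjj]
    exact Nat.mod_eq_of_lt (by omega)
  · rw [h] at hd ⊢
    have h2 : 2 * j = (2 ^ m - 1) + (2 * (j % 2 ^ (m - 1)) + 1) := by omega
    rw [h2, Nat.add_mod_left, Nat.mod_eq_of_lt (by omega)]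

lemma rot_testBit (hm : 0 < m) {j : ℕ} (hj : j < 2 ^ m - 1) {i : ℕ} (hi : i < m) :
    (2 * j % (2 ^ m - 1)).testBit i = j.testBit ((i + m - 1) % m) := by
  have h1 : 2 ^ m = 2 * 2 ^ (m - 1) := by
    conv_lhs => rw [show m = (m - 1) + 1 by omega]
    rw [pow_succ]; ring
  have hd := Nat.div_add_mod j (2 ^ (m - 1))
  have hm' : j % 2 ^ (m - 1) < 2 ^ (m - 1) := Nat.mod_lt _ (Nat.two_pow_pos _)
  have hb : j / 2 ^ (m - 1) < 2 :=
    (Nat.div_lt_iff_lt_mul (Nat.two_pow_pos _)).mpr (by omega)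
  rw [rot_eq hm hj]
  have hrw : 2 * (j % 2 ^ (m - 1)) + j / 2 ^ (m - 1)
      = 2 ^ 1 * (j % 2 ^ (m - 1)) + j / 2 ^ (m - 1) := by ring_nf
  rw [hrw, Nat.testBit_two_pow_mul_add _ (by simpa using hb) i]
  have hjrw : j = 2 ^ (m - 1) * (j / 2 ^ (m - 1)) + j % 2 ^ (m - 1) := hd.symm
  match i with
  | 0 =>
    rw [if_pos (by norm_num)]
    have : (0 + m - 1) % m = m - 1 := by
      rw [show 0 + m - 1 = m - 1 by omega]; exact Nat.mod_eq_of_lt (by omega)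
    rw [this]
    conv_rhs => rw [hjrw]
    rw [Nat.testBit_two_pow_mul_add _ hm' (m - 1)]
    simp
  | (i' + 1) =>
    rw [if_neg (by omega)]
    have h2 : i' + 1 - 1 = i' := rfl
    rw [h2, Nat.testBit_mod_two_pow]
    have hi' : i' < m - 1 := by omega
    have h3 : (i' + 1 + m - 1) % m = i' := by
      have : i' + 1 + m - 1 = i' + m := by omega
      rw [this, Nat.add_mod_right, Nat.mod_eq_of_lt (by omega)]
    rw [h3]
    simp [hi']

variable {n : ℕ}

lemma pow_mul_mod (i j : ℕ) : 2 ^ (i + 1) * j % n = 2 * (2 ^ i * j % n) % n := by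
  rw [Nat.mul_mod 2 (2 ^ i * j % n), Nat.mod_mod_of_dvd _ dvd_rfl, ← Nat.mul_mod,
    pow_succ, mul_comm (2 ^ i) 2, mul_assoc]

lemma rotpow_testBit (hm : 0 < m) (hn : n = 2 ^ m - 1) {j : ℕ} (hj : j < n) (i : ℕ)
    {a : ℕ} (ha : a < m) :
    (2 ^ i * j % n).testBit ((a + i) % m) = j.testBit a := by
  subst hn
  induction i with
  | zero =>
    rw [pow_zero, one_mul, Nat.mod_eq_of_lt hj, Nat.add_zero, Nat.mod_eq_of_lt ha]
  | succ i ih =>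
    have ht : 2 ^ i * j % (2 ^ m - 1) < 2 ^ m - 1 := Nat.mod_lt _ (by omega)
    rw [pow_mul_mod, rot_testBit hm ht (Nat.mod_lt _ (by omega))]
    have h1 : ((a + (i + 1)) % m + m - 1) % m = (a + i) % m := by
      have h2 : (a + (i + 1)) % m + m - 1 = (a + (i + 1)) % m + (m - 1) := by omega
      rw [h2, Nat.mod_add_mod]
      have h3 : a + (i + 1) + (m - 1) = (a + i) + m := by omega
      rw [h3, Nat.add_mod_right]
    rw [h1, ih]

lemma mod_cancel (hm : 0 < m) (x i : ℕ) : (x + (m - i % m) + i) % m = x % m := by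
  have hd := Nat.div_add_mod i m
  have hlt : i % m < m := Nat.mod_lt _ hm
  have h1 : x + (m - i % m) + i = x + m * (i / m + 1) := by
    have h2 : m * (i / m + 1) = m * (i / m) + m := by ring
    omega
  rw [h1, Nat.add_mul_mod_self_left]

lemma rotpow_testBit' (hm : 0 < m) (hn : n = 2 ^ m - 1) {j : ℕ} (hj : j < n) (i : ℕ)
    {c : ℕ} (hc : c < m) :
    (2 ^ i * j % n).testBit c = j.testBit ((c + (m - i % m)) % m) := by
  have ha : (c + (m - i % m)) % m < m := Nat.mod_lt _ hm
  have key : ((c + (m - i % m)) % m + i) % m = c := by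
    rw [Nat.mod_add_mod, mod_cancel hm, Nat.mod_eq_of_lt hc]
  rw [← rotpow_testBit hm hn hj i ha, key]

lemma rotpow_lt (hm : 0 < m) (hn : n = 2 ^ m - 1) (i j : ℕ) : 2 ^ i * j % n < n := by
  subst hn
  have h2 : 2 ^ 1 ≤ 2 ^ m := Nat.pow_le_pow_right (by norm_num) hm
  exact Nat.mod_lt _ (by omega)

lemma rotpow_lt_pow (hm : 0 < m) (hn : n = 2 ^ m - 1) (i j : ℕ) : 2 ^ i * j % n < 2 ^ m := by
  have := rotpow_lt hm hn i j; omega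

lemma wtm_rotpow (hm : 0 < m) (hn : n = 2 ^ m - 1) {j : ℕ} (hj : j < n) (i : ℕ) :
    wtm m (2 ^ i * j % n) = wtm m j := by
  simp only [wtm]
  apply Finset.card_nbij' (fun c => (c + (m - i % m)) % m) (fun a => (a + i) % m)
  · intro c hc
    simp only [Finset.mem_coe, Finset.mem_filter, Finset.mem_range] at hc ⊢
    refine ⟨Nat.mod_lt _ hm, ?_⟩
    rw [← rotpow_testBit' hm hn hj i hc.1]
    exact hc.2
  · intro a ha
    simp only [Finset.mem_coe, Finset.mem_filter, Finset.mem_range] at ha ⊢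
    refine ⟨Nat.mod_lt _ hm, ?_⟩
    rw [rotpow_testBit' hm hn hj i (Nat.mod_lt _ hm)]
    have : ((a + i) % m + (m - i % m)) % m = a := by
      rw [Nat.mod_add_mod]
      have h1 : a + i + (m - i % m) = a + (m - i % m) + i := by ring
      rw [h1, mod_cancel hm, Nat.mod_eq_of_lt ha.1]
    rw [this]
    exact ha.2
  · intro c hc
    simp only [Finset.mem_coe, Finset.mem_filter, Finset.mem_range] at hc ⊢
    rw [Nat.mod_add_mod, mod_cancel hm, Nat.mod_eq_of_lt hc.1]
  · intro a ha
    simp only [Finset.mem_coe, Finset.mem_filter, Finset.mem_range] at ha ⊢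
    rw [Nat.mod_add_mod]
    have h1 : a + i + (m - i % m) = a + (m - i % m) + i := by ring
    rw [h1, mod_cancel hm, Nat.mod_eq_of_lt ha.1]

lemma or_rotpow (hm : 0 < m) (hn : n = 2 ^ m - 1) {k j : ℕ} (hk : k < n) (hj : j < n)
    (h : k ||| j = j) (i : ℕ) :
    (2 ^ i * k % n) ||| (2 ^ i * j % n) = 2 ^ i * j % n := by
  rw [or_eq_iff]
  intro c hc
  by_cases hcm : c < m
  · rw [rotpow_testBit' hm hn hj i hcm]
    rw [rotpow_testBit' hm hn hk i hcm] at hc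
    exact or_eq_iff.mp h _ hc
  · rw [testBit_ge (rotpow_lt_pow hm hn i k) (by omega)] at hc
    exact absurd hc (by simp)

lemma rotpow_m_mul (hm : 0 < m) (hn : n = 2 ^ m - 1) {j : ℕ} (hj : j < n) :
    2 ^ m * j % n = j := by
  subst hn
  have hle : j ≤ 2 ^ m * j := Nat.le_mul_of_pos_left j (Nat.two_pow_pos m)
  have h1 : 2 ^ m * j = (2 ^ m - 1) * j + j := by
    rw [Nat.sub_mul, one_mul]; omega
  rw [h1, Nat.mul_add_mod]
  exact Nat.mod_eq_of_lt hj

lemma rotpow_compose (a b j : ℕ) : 2 ^ a * (2 ^ b * j % n) % n = 2 ^ (a + b) * j % n := by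
  rw [Nat.mul_mod (2 ^ a) (2 ^ b * j % n), Nat.mod_mod_of_dvd _ dvd_rfl, ← Nat.mul_mod,
    pow_add, mul_assoc]

lemma rotpow_reduce (hm : 0 < m) (hn : n = 2 ^ m - 1) {j : ℕ} (hj : j < n) (i : ℕ) :
    2 ^ i * j % n = 2 ^ (i % m) * j % n := by
  have key : ∀ q, 2 ^ (m * q) * j % n = j := by
    intro q
    induction q with
    | zero => simp [Nat.mod_eq_of_lt hj]
    | succ q ih =>
      have : m * (q + 1) = m + m * q := by ring
      rw [this, ← rotpow_compose, ih, rotpow_m_mul hm hn hj]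
  have hd := Nat.div_add_mod i m
  conv_lhs => rw [show i = i % m + m * (i / m) by omega, ← rotpow_compose, key]

lemma rotpow_inv (hm : 0 < m) (hn : n = 2 ^ m - 1) {j : ℕ} (hj : j < n) (i : ℕ) :
    2 ^ (m - i % m) * (2 ^ i * j % n) % n = j := by
  rw [rotpow_compose, rotpow_reduce hm hn hj]
  have h1 : (m - i % m + i) % m = 0 := by
    have h := mod_cancel hm 0 i
    simpa using h
  rw [h1, pow_zero, one_mul, Nat.mod_eq_of_lt hj]

lemma rotpow_inj (hm : 0 < m) (hn : n = 2 ^ m - 1) {k j : ℕ} (hk : k < n) (hj : j < n)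
    (i : ℕ) (h : 2 ^ i * k % n = 2 ^ i * j % n) : k = j := by
  have h1 := rotpow_inv hm hn hk i
  have h2 := rotpow_inv hm hn hj i
  rw [h] at h1
  rw [h1] at h2
  exact h2

lemma wtm_lt_of_proper {k j : ℕ} (hk : k < 2 ^ m) (hj : j < 2 ^ m)
    (h : k ||| j = j) (hne : k ≠ j) : wtm m k < wtm m j := by
  have hsub : bitsF m k ⊆ bitsF m j := by
    intro i hi
    simp only [bitsF, Finset.mem_filter] at hi ⊢
    exact ⟨hi.1, or_eq_iff.mp h _ hi.2⟩
  have hssub : bitsF m k ⊂ bitsF m j := by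
    refine ⟨hsub, fun hsub2 => hne ?_⟩
    have : bitsF m k = bitsF m j := Finset.Subset.antisymm hsub hsub2
    have hk2 := sig_bitsF hk
    have hj2 := sig_bitsF hj
    rw [← hk2, ← hj2, this]
  exact Finset.card_lt_card hssub

lemma dbl_eq_rotpow (j : ℕ) : 2 * j % n = 2 ^ 1 * j % n := by norm_num

lemma dbl_lt (hm : 0 < m) (hn : n = 2 ^ m - 1) (j : ℕ) : 2 * j % n < n := by
  rw [dbl_eq_rotpow]; exact rotpow_lt hm hn 1 j

lemma wtm_dbl (hm : 0 < m) (hn : n = 2 ^ m - 1) {j : ℕ} (hj : j < n) :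
    wtm m (2 * j % n) = wtm m j := by
  rw [dbl_eq_rotpow]; exact wtm_rotpow hm hn hj 1

lemma dbl_inv (hm : 2 ≤ m) (hn : n = 2 ^ m - 1) {j : ℕ} (hj : j < n) :
    2 ^ (m - 1) * (2 * j % n) % n = j := by
  rw [dbl_eq_rotpow]
  have h := rotpow_inv (by omega : 0 < m) hn hj 1
  rwa [Nat.mod_eq_of_lt (by omega : 1 < m)] at h

lemma inv_dbl (hm : 2 ≤ m) (hn : n = 2 ^ m - 1) {j : ℕ} (hj : j < n) :
    2 * (2 ^ (m - 1) * j % n) % n = j := by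
  rw [dbl_eq_rotpow, rotpow_compose, show 1 + (m - 1) = m by omega]
  exact rotpow_m_mul (by omega) hn hj

lemma dbl_inj (hm : 2 ≤ m) (hn : n = 2 ^ m - 1) {k j : ℕ} (hk : k < n) (hj : j < n)
    (h : 2 * k % n = 2 * j % n) : k = j := by
  rw [dbl_eq_rotpow, dbl_eq_rotpow] at h
  exact rotpow_inj (by omega) hn hk hj 1 h

lemma dbl_or_iff (hm : 2 ≤ m) (hn : n = 2 ^ m - 1) {k j : ℕ} (hk : k < n) (hj : j < n) :
    ((2 * k % n) ||| (2 * j % n) = 2 * j % n ∧ 2 * k % n ≠ 2 * j % n)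
      ↔ (k ||| j = j ∧ k ≠ j) := by
  have hm0 : 0 < m := by omega
  constructor
  · rintro ⟨hor, hne⟩
    constructor
    · have h2 := or_rotpow hm0 hn (dbl_lt hm0 hn k) (dbl_lt hm0 hn j) hor (m - 1)
      rwa [dbl_inv hm hn hk, dbl_inv hm hn hj] at h2
    · rintro rfl; exact hne rfl
  · rintro ⟨hor, hne⟩
    constructor
    · rw [dbl_eq_rotpow, dbl_eq_rotpow]
      exact or_rotpow hm0 hn hk hj hor 1
    · intro h; exact hne (dbl_inj hm hn hk hj h)

/-- membership in a cyclotomic coset is symmetric -/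
lemma mem_cyc_symm (hm : 0 < m) (hn : n = 2 ^ m - 1) {t u : ℕ} (ht : t < n)
    (hu : u ∈ cycCoset n m t) : t ∈ cycCoset n m u := by
  rw [cycCoset, Finset.mem_image] at hu ⊢
  obtain ⟨i, him, rfl⟩ := hu
  rw [Finset.mem_range] at him
  rcases Nat.eq_zero_or_pos i with hi0 | hi0
  · subst hi0
    refine ⟨0, Finset.mem_range.mpr hm, ?_⟩
    simp [Nat.mod_eq_of_lt ht]
  · refine ⟨m - i, Finset.mem_range.mpr (by omega), ?_⟩
    have h := rotpow_inv hm hn ht i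
    rwa [Nat.mod_eq_of_lt him] at h

lemma cyc_subset (hm : 0 < m) (hn : n = 2 ^ m - 1) {t u : ℕ} (ht : t < n)
    (hu : u ∈ cycCoset n m t) : cycCoset n m u ⊆ cycCoset n m t := by
  rw [cycCoset, Finset.mem_image] at hu
  obtain ⟨i, him, rfl⟩ := hu
  intro x hx
  rw [cycCoset, Finset.mem_image] at hx ⊢
  obtain ⟨a, ham, rfl⟩ := hx
  rw [Finset.mem_range] at ham him
  refine ⟨(a + i) % m, Finset.mem_range.mpr (Nat.mod_lt _ hm), ?_⟩
  rw [rotpow_compose]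
  exact (rotpow_reduce hm hn ht (a + i)).symm

lemma cyc_eq (hm : 0 < m) (hn : n = 2 ^ m - 1) {t u : ℕ} (ht : t < n)
    (hu : u ∈ cycCoset n m t) : cycCoset n m u = cycCoset n m t := by
  refine Finset.Subset.antisymm (cyc_subset hm hn ht hu) (cyc_subset hm hn ?_ ?_)
  · rw [cycCoset, Finset.mem_image] at hu
    obtain ⟨i, him, rfl⟩ := hu
    exact rotpow_lt hm hn i t
  · exact mem_cyc_symm hm hn ht hu

lemma wtm_le (m j : ℕ) : wtm m j ≤ m := by
  simpa [wtm] using Finset.card_filter_le (Finset.range m) _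

lemma wtm_all_ones (m : ℕ) : wtm m (2 ^ m - 1) = m := by
  simp only [wtm]
  have : ∀ i ∈ Finset.range m, (2 ^ m - 1).testBit i = true := by
    intro i hi
    rw [Nat.testBit_two_pow_sub_one]
    simpa using Finset.mem_range.mp hi
  rw [Finset.filter_true_of_mem this, Finset.card_range]

lemma exists_unset_bit {m k : ℕ} (h : wtm m k < m) : ∃ b, b < m ∧ k.testBit b = false := by
  by_contra h2
  push_neg at h2
  have : (Finset.range m).filter (fun i => k.testBit i) = Finset.range m := by
    apply Finset.filter_true_of_mem
    intro i hi
    have := h2 i (Finset.mem_range.mp hi)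
    simpa using this
  rw [wtm, this, Finset.card_range] at h
  omega

end Rot

/-! ### Field-side toolkit -/

section Alg

variable {F : Type*} [Field F] {m n : ℕ}

lemma pow_expand [CharP F 2] {j : ℕ} (hj : j < 2 ^ m) (β x : F) :
    (x + β) ^ j = ∑ T ∈ (bitsF m j).powerset, x ^ sig T * β ^ sig (bitsF m j \ T) := by
  haveI : Fact (Nat.Prime 2) := ⟨Nat.prime_two⟩
  conv_lhs => rw [← sig_bitsF hj]
  rw [sig, ← Finset.prod_pow_eq_pow_sum]
  rw [Finset.prod_congr rfl (fun b _ => add_pow_char_pow 2 b (x := x) (y := β)), Finset.prod_add]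
  refine Finset.sum_congr rfl fun T hT => ?_
  rw [Finset.prod_pow_eq_pow_sum, Finset.prod_pow_eq_pow_sum]
  rfl

lemma inner_reindex [CharP F 2] (hm : 0 < m) (hn : n = 2 ^ m - 1)
    {r j : ℕ} (hjn : j < n) (hjr : wtm m j ≤ r) (β x : F) :
    (x + β) ^ j - x ^ j
      = ∑ k ∈ (Finset.range n).filter (fun k => wtm m k ≤ r - 1),
          (if k ||| j = j ∧ k ≠ j then β ^ (j - k) else 0) * x ^ k := by
  have hj2 : j < 2 ^ m := by have := Nat.two_pow_pos m; omega
  have hW : sig (bitsF m j) = j := sig_bitsF hj2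
  have hWsub : bitsF m j ⊆ Finset.range m := Finset.filter_subset _ _
  have htop : (bitsF m j) ∈ (bitsF m j).powerset := Finset.mem_powerset_self _
  have htv : x ^ sig (bitsF m j) * β ^ sig (bitsF m j \ (bitsF m j)) = x ^ j := by
    rw [hW, Finset.sdiff_self]
    simp [sig]
  have hsplit := Finset.sum_erase_add ((bitsF m j).powerset)
      (fun T => x ^ sig T * β ^ sig (bitsF m j \ T)) htop
  rw [pow_expand hj2 β x, ← hsplit]
  simp only [htv, add_sub_cancel_right]
  rw [Finset.sum_congr rfl (fun k _ => show
      (if k ||| j = j ∧ k ≠ j then β ^ (j - k) else 0) * x ^ k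
        = (if k ||| j = j ∧ k ≠ j then β ^ (j - k) * x ^ k else 0) by
    split <;> simp), ← Finset.sum_filter]
  apply Finset.sum_nbij' (fun T => sig T) (fun k => bitsF m k)
  · intro T hT
    rw [Finset.mem_erase, Finset.mem_powerset] at hT
    obtain ⟨hTne, hTsub⟩ := hT
    have hTr : T ⊆ Finset.range m := hTsub.trans hWsub
    have hsigle : sig T ≤ j := by
      rw [← hW]; exact Finset.sum_le_sum_of_subset hTsub
    have hor : sig T ||| j = j := by
      rw [or_eq_iff]
      intro i hi
      rw [sig_testBit hTr] at hi
      have hiT : i ∈ T := by simpa using hi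
      have := hTsub hiT
      simp only [bitsF, Finset.mem_filter] at this
      exact this.2
    have hne : sig T ≠ j := by
      intro h
      apply hTne
      rw [← bitsF_sig hTr, h]
    have hwt : wtm m (sig T) ≤ r - 1 := by
      have h1 : wtm m (sig T) < wtm m j := by
        apply wtm_lt_of_proper (sig_lt hTr) hj2 hor hne
      omega
    simp only [Finset.mem_filter, Finset.mem_range]
    exact ⟨⟨by omega, hwt⟩, hor, hne⟩
  · intro k hk
    simp only [Finset.mem_filter, Finset.mem_range] at hk
    obtain ⟨⟨hkn, hkw⟩, hor, hne⟩ := hk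
    rw [Finset.mem_erase, Finset.mem_powerset]
    constructor
    · intro h
      apply hne
      have hk2 : k < 2 ^ m := by have := Nat.two_pow_pos m; omega
      rw [← sig_bitsF hk2, h, hW]
    · intro i hi
      simp only [bitsF, Finset.mem_filter] at hi ⊢
      exact ⟨hi.1, or_eq_iff.mp hor _ hi.2⟩
  · intro T hT
    rw [Finset.mem_erase, Finset.mem_powerset] at hT
    exact bitsF_sig (hT.2.trans hWsub)
  · intro k hk
    simp only [Finset.mem_filter, Finset.mem_range] at hk
    exact sig_bitsF (by have := Nat.two_pow_pos m; omega)
  · intro T hT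
    rw [Finset.mem_erase, Finset.mem_powerset] at hT
    have hsd : sig (bitsF m j \ T) = j - sig T := by
      have h2 : sig (bitsF m j \ T) + sig T = sig (bitsF m j) :=
        Finset.sum_sdiff (f := fun b => 2 ^ b) hT.2
      rw [hW] at h2
      omega
    rw [hsd, mul_comm]

lemma deriv_repr [CharP F 2] (hm : 0 < m) (hn : n = 2 ^ m - 1) (r : ℕ) (A : ℕ → F)
    (β x : F) :
    (∑ j ∈ (Finset.range n).filter (fun j => wtm m j ≤ r), A j * (x + β) ^ j)
      - ∑ j ∈ (Finset.range n).filter (fun j => wtm m j ≤ r), A j * x ^ j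
    = ∑ k ∈ (Finset.range n).filter (fun k => wtm m k ≤ r - 1),
        (∑ j ∈ (Finset.range n).filter (fun j => wtm m j ≤ r),
          if k ||| j = j ∧ k ≠ j then A j * β ^ (j - k) else 0) * x ^ k := by
  rw [← Finset.sum_sub_distrib]
  have h1 : ∀ j ∈ (Finset.range n).filter (fun j => wtm m j ≤ r),
      A j * (x + β) ^ j - A j * x ^ j
      = ∑ k ∈ (Finset.range n).filter (fun k => wtm m k ≤ r - 1),
          (if k ||| j = j ∧ k ≠ j then A j * β ^ (j - k) else 0) * x ^ k := by
    intro j hj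
    simp only [Finset.mem_filter, Finset.mem_range] at hj
    rw [← mul_sub, inner_reindex hm hn hj.1 hj.2 β x, Finset.mul_sum]
    refine Finset.sum_congr rfl fun k _ => ?_
    split <;> ring
  rw [Finset.sum_congr rfl h1, Finset.sum_comm]
  refine Finset.sum_congr rfl fun k _ => ?_
  rw [Finset.sum_mul]

lemma pow_mod_n {β : F} (hβ : β ^ n = 1) (t : ℕ) : β ^ t = β ^ (t % n) := by
  conv_lhs => rw [show t = n * (t / n) + t % n from (Nat.div_add_mod t n).symm]
  rw [pow_add, pow_mul, hβ, one_pow, one_mul]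

lemma beta_double (hm : 0 < m) (hn : n = 2 ^ m - 1) {β : F} (hβ : β ^ n = 1)
    {k j : ℕ} (hk : k < n) (hj : j < n) (hle : k ≤ j) (hle2 : 2 * k % n ≤ 2 * j % n) :
    β ^ ((j - k) * 2) = β ^ (2 * j % n - 2 * k % n) := by
  rw [pow_mod_n hβ ((j - k) * 2), pow_mod_n hβ (2 * j % n - 2 * k % n)]
  congr 1
  have h1 := Nat.div_add_mod (2 * j) n
  have h2 := Nat.div_add_mod (2 * k) n
  have h3 : 2 * k / n ≤ 2 * j / n := Nat.div_le_div_right (by omega)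
  have h4 : (j - k) * 2 = (2 * j % n - 2 * k % n) + n * (2 * j / n - 2 * k / n) := by
    generalize 2 * j / n = qj at h1 h3 ⊢
    generalize 2 * k / n = qk at h2 h3 ⊢
    generalize 2 * j % n = uj at h1 hle2 ⊢
    generalize 2 * k % n = uk at h2 hle2 ⊢
    have h5 : n * (qj - qk) = n * qj - n * qk := Nat.mul_sub_left_distrib _ _ _
    have h6 : n * qk ≤ n * qj := Nat.mul_le_mul_left n h3
    omega
  rw [h4, Nat.add_mul_mod_self_left]

lemma deriv_constraint [CharP F 2] (hm : 2 ≤ m) (hn : n = 2 ^ m - 1) (r : ℕ)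
    (A : ℕ → F) {β : F} (hβ : β ^ n = 1)
    (hA : ∀ j ∈ (Finset.range n).filter (fun j => wtm m j ≤ r), A (2 * j % n) = A j ^ 2)
    {k : ℕ} (hk : k < n) :
    (∑ j ∈ (Finset.range n).filter (fun j => wtm m j ≤ r),
        if (2 * k % n) ||| j = j ∧ 2 * k % n ≠ j then A j * β ^ (j - 2 * k % n) else 0)
    = (∑ j ∈ (Finset.range n).filter (fun j => wtm m j ≤ r),
        if k ||| j = j ∧ k ≠ j then A j * β ^ (j - k) else 0) ^ 2 := by
  haveI : Fact (Nat.Prime 2) := ⟨Nat.prime_two⟩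
  have hm0 : 0 < m := by omega
  rw [sum_pow_char]
  refine (Finset.sum_nbij' (fun j => 2 * j % n) (fun j => 2 ^ (m - 1) * j % n)
    ?_ ?_ ?_ ?_ ?_).symm
  · intro j hj
    simp only [Finset.mem_filter, Finset.mem_range] at hj ⊢
    exact ⟨dbl_lt hm0 hn j, by rw [wtm_dbl hm0 hn hj.1]; exact hj.2⟩
  · intro j hj
    simp only [Finset.mem_filter, Finset.mem_range] at hj ⊢
    exact ⟨rotpow_lt hm0 hn _ j, by rw [wtm_rotpow hm0 hn hj.1]; exact hj.2⟩
  · intro j hj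
    simp only [Finset.mem_filter, Finset.mem_range] at hj
    exact dbl_inv hm hn hj.1
  · intro j hj
    simp only [Finset.mem_filter, Finset.mem_range] at hj
    exact inv_dbl hm hn hj.1
  · intro j hj
    simp only [Finset.mem_filter, Finset.mem_range] at hj
    by_cases hc : k ||| j = j ∧ k ≠ j
    · rw [if_pos hc, if_pos ((dbl_or_iff hm hn hk hj.1).mpr hc)]
      have hle2 : 2 * k % n ≤ 2 * j % n :=
        or_le ((dbl_or_iff hm hn hk hj.1).mpr hc).1
      rw [mul_pow, ← pow_mul, ← hA j (by simp only [Finset.mem_filter, Finset.mem_range]; exact hj),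
        beta_double hm0 hn hβ hk hj.1 (or_le hc.1) hle2]
    · rw [if_neg hc, if_neg (fun h => hc ((dbl_or_iff hm hn hk hj.1).mp h))]
      rw [zero_pow]
      norm_num

end Alg

section Fin

variable {F : Type*} [Field F] [Fintype F] {m n : ℕ}

lemma charP_two (hm : 0 < m) (hF : Fintype.card F = 2 ^ m) : CharP F 2 := by
  have h0 : ((Fintype.card F : ℕ) : F) = 0 := FiniteField.cast_card_eq_zero F
  rw [hF] at h0
  push_cast at h0
  have h2 : (2 : F) = 0 := pow_eq_zero_iff (by omega) |>.mp h0
  have hdvd : ringChar F ∣ 2 := ringChar.dvd (by exact_mod_cast h2)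
  haveI := ringChar.charP F
  have hprime := CharP.char_is_prime_or_zero F (ringChar F)
  have hr2 : ringChar F = 2 := by
    rcases hprime with hp | hp
    · exact (Nat.prime_dvd_prime_iff_eq hp Nat.prime_two).mp hdvd
    · rw [hp] at hdvd
      exact absurd (Nat.eq_zero_of_zero_dvd hdvd) (by norm_num)
  rw [← hr2]
  exact ringChar.charP F

lemma pow_card_self (hF : Fintype.card F = 2 ^ m) (a : F) : a ^ 2 ^ m = a := by
  rw [← hF]; exact FiniteField.pow_card a

lemma beta_pow_n (hn : n = 2 ^ m - 1) (hF : Fintype.card F = 2 ^ m)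
    {β : F} (hβ : β ≠ 0) : β ^ n = 1 := by
  have h := FiniteField.pow_card_sub_one_eq_one β hβ
  rwa [hF, ← hn] at h

lemma coeff_sum_CX {U : Finset ℕ} (Cf : ℕ → F) (k : ℕ) :
    (∑ j ∈ U, Polynomial.C (Cf j) * Polynomial.X ^ j).coeff k
      = if k ∈ U then Cf k else 0 := by
  classical
  rw [Polynomial.finset_sum_coeff,
    Finset.sum_congr rfl (fun j _ => show
      (Polynomial.C (Cf j) * Polynomial.X ^ j).coeff k = if j = k then Cf j else 0 by
        rw [Polynomial.coeff_C_mul, Polynomial.coeff_X_pow]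
        by_cases h : j = k
        · subst h; simp
        · rw [if_neg (fun hh => h hh.symm), if_neg h, mul_zero])]
  exact Finset.sum_ite_eq' U k Cf

lemma coeff_unique (hF : Fintype.card F = 2 ^ m) {S T : Finset ℕ}
    (hS : ∀ j ∈ S, j < 2 ^ m) (hT : ∀ j ∈ T, j < 2 ^ m) (A B : ℕ → F)
    (h : ∀ x : F, ∑ j ∈ S, A j * x ^ j = ∑ k ∈ T, B k * x ^ k)
    {k : ℕ} (hk : k ∈ T) (hk' : k ∉ S) : B k = 0 := by
  classical
  set P : Polynomial F :=
    (∑ j ∈ S, Polynomial.C (A j) * Polynomial.X ^ j)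
      - ∑ j ∈ T, Polynomial.C (B j) * Polynomial.X ^ j with hP
  have heval : ∀ x : F, P.eval x = 0 := by
    intro x
    simp only [hP, Polynomial.eval_sub, Polynomial.eval_finset_sum, Polynomial.eval_mul,
      Polynomial.eval_C, Polynomial.eval_pow, Polynomial.eval_X]
    rw [h x]; ring
  have hdeg : P.natDegree < Fintype.card F := by
    rw [hF]
    have hb : ∀ (U : Finset ℕ) (C' : ℕ → F), (∀ j ∈ U, j < 2 ^ m) →
        (∑ j ∈ U, Polynomial.C (C' j) * Polynomial.X ^ j).natDegree ≤ 2 ^ m - 1 := by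
      intro U C' hU
      refine Polynomial.natDegree_sum_le_of_forall_le _ _ fun j hj => ?_
      refine (Polynomial.natDegree_C_mul_X_pow_le _ _).trans ?_
      have := hU j hj; omega
    have h1 := hb S A hS
    have h2 := hb T B hT
    have h3 := Polynomial.natDegree_sub_le (∑ j ∈ S, Polynomial.C (A j) * Polynomial.X ^ j)
      (∑ j ∈ T, Polynomial.C (B j) * Polynomial.X ^ j)
    have := Nat.two_pow_pos m
    rw [hP]
    omega
  have hP0 : P = 0 :=
    Polynomial.eq_zero_of_natDegree_lt_card_of_eval_eq_zero P Function.injective_id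
      (fun x => heval x) hdeg
  have hc := congrArg (fun Q => Polynomial.coeff Q k) hP0
  simp only [hP, Polynomial.coeff_sub, Polynomial.coeff_zero] at hc
  rw [coeff_sum_CX, coeff_sum_CX, if_pos hk, if_neg hk'] at hc
  simpa using hc

lemma exists_nonzero_eval (hm : 0 < m) (hF : Fintype.card F = 2 ^ m)
    (g : ℕ → F) (p : ℕ → Prop) [DecidablePred p] (h0 : p 0) (hg : g 0 ≠ 0) :
    ∃ a : F, (∑ i ∈ Finset.range m, if p i then g i * a ^ 2 ^ i else 0) ≠ 0 := by
  classical
  by_contra hall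
  push_neg at hall
  set Q : Polynomial F :=
    ∑ i ∈ Finset.range m, if p i then Polynomial.C (g i) * Polynomial.X ^ 2 ^ i else 0 with hQ
  have heval : ∀ a : F, Q.eval a = 0 := by
    intro a
    have h := hall a
    simp only [hQ, Polynomial.eval_finset_sum]
    rw [← h]
    refine Finset.sum_congr rfl fun i _ => ?_
    split <;> simp
  have hdeg : Q.natDegree < Fintype.card F := by
    rw [hF]
    have hb : Q.natDegree ≤ 2 ^ (m - 1) := by
      refine Polynomial.natDegree_sum_le_of_forall_le _ _ fun i hi => ?_
      split
      · refine (Polynomial.natDegree_C_mul_X_pow_le _ _).trans ?_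
        exact Nat.pow_le_pow_right (by norm_num) (by have := Finset.mem_range.mp hi; omega)
      · simp
    have h2 : (2:ℕ) ^ (m - 1) < 2 ^ m := Nat.pow_lt_pow_right (by norm_num) (by omega)
    omega
  have hQ0 : Q = 0 :=
    Polynomial.eq_zero_of_natDegree_lt_card_of_eval_eq_zero Q Function.injective_id heval hdeg
  have hc := congrArg (fun R => Polynomial.coeff R 1) hQ0
  simp only [hQ, Polynomial.finset_sum_coeff, Polynomial.coeff_zero] at hc
  rw [Finset.sum_eq_single 0] at hc
  · rw [if_pos h0] at hc
    have heq : (Polynomial.C (g 0) * Polynomial.X ^ 2 ^ 0).coeff 1 = g 0 := by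
      simp
    rw [heq] at hc
    exact hg hc
  · intro i hi hne
    split
    · rw [Polynomial.coeff_C_mul, Polynomial.coeff_X_pow, if_neg, mul_zero]
      have h2 : (2:ℕ) ^ 1 ≤ 2 ^ i := Nat.pow_le_pow_right (by norm_num) (by omega)
      omega
    · simp
  · intro h0m
    exact absurd (Finset.mem_range.mpr hm) h0m

lemma pow_sq_cycle (hF : Fintype.card F = 2 ^ m) (a : F) {i : ℕ} (hi : i < m) :
    a ^ 2 ^ ((i + 1) % m) = (a ^ 2 ^ i) ^ 2 := by
  rw [← pow_mul, ← pow_succ]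
  by_cases h : i + 1 = m
  · rw [← h, Nat.mod_self, pow_zero, pow_one, h]
    exact (pow_card_self hF a).symm
  · rw [Nat.mod_eq_of_lt (by omega)]

lemma Afam_constraint [CharP F 2] (hm : 2 ≤ m) (hn : n = 2 ^ m - 1)
    (hF : Fintype.card F = 2 ^ m) {s : ℕ} (hs : s < n) (a : F) {u : ℕ} (hu : u < n) :
    (∑ i ∈ Finset.range m, if 2 ^ i * s % n = 2 * u % n then a ^ 2 ^ i else 0)
    = (∑ i ∈ Finset.range m, if 2 ^ i * s % n = u then a ^ 2 ^ i else 0) ^ 2 := by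
  haveI : Fact (Nat.Prime 2) := ⟨Nat.prime_two⟩
  have hm0 : 0 < m := by omega
  rw [sum_pow_char]
  refine (Finset.sum_nbij' (fun i => (i + 1) % m) (fun i => (i + (m - 1)) % m)
    ?_ ?_ ?_ ?_ ?_).symm
  · intro i hi
    exact Finset.mem_range.mpr (Nat.mod_lt _ hm0)
  · intro i hi
    exact Finset.mem_range.mpr (Nat.mod_lt _ hm0)
  · intro i hi
    have him := Finset.mem_range.mp hi
    show ((i + 1) % m + (m - 1)) % m = i
    rw [Nat.mod_add_mod]
    have h1 : i + 1 + (m - 1) = i + m := by omega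
    rw [h1, Nat.add_mod_right, Nat.mod_eq_of_lt him]
  · intro i hi
    have him := Finset.mem_range.mp hi
    show ((i + (m - 1)) % m + 1) % m = i
    rw [Nat.mod_add_mod]
    have h1 : i + (m - 1) + 1 = i + m := by omega
    rw [h1, Nat.add_mod_right, Nat.mod_eq_of_lt him]
  · intro i hi
    have him := Finset.mem_range.mp hi
    have hcond : (2 ^ ((i + 1) % m) * s % n = 2 * u % n) ↔ (2 ^ i * s % n = u) := by
      rw [← rotpow_reduce hm0 hn hs (i + 1), pow_mul_mod]
      constructor
      · intro h
        exact dbl_inj hm hn (rotpow_lt hm0 hn i s) hu h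
      · intro h
        rw [h]
    by_cases hc : 2 ^ i * s % n = u
    · rw [if_pos hc, if_pos (hcond.mpr hc), pow_sq_cycle hF a him]
    · rw [if_neg hc, if_neg (fun h => hc (hcond.mp h))]
      rw [zero_pow]
      norm_num

lemma Bfam_collapse (hm : 0 < m) (hn : n = 2 ^ m - 1) {r s : ℕ} (hs : s < n)
    (hsr : wtm m s ≤ r) (a β : F) (k : ℕ) :
    (∑ j ∈ (Finset.range n).filter (fun j => wtm m j ≤ r),
        if k ||| j = j ∧ k ≠ j then
          (∑ i ∈ (Finset.range m).filter (fun i => 2 ^ i * s % n = j), a ^ 2 ^ i)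
            * β ^ (j - k)
        else 0)
    = ∑ i ∈ Finset.range m,
        if k ||| (2 ^ i * s % n) = 2 ^ i * s % n ∧ k ≠ 2 ^ i * s % n then
          β ^ (2 ^ i * s % n - k) * a ^ 2 ^ i else 0 := by
  conv_rhs => rw [← Finset.sum_fiberwise_of_maps_to (g := fun i => 2 ^ i * s % n)
      (t := (Finset.range n).filter (fun j => wtm m j ≤ r))
      (fun i _ => by
        simp only [Finset.mem_filter, Finset.mem_range]
        exact ⟨rotpow_lt hm hn i s, by rw [wtm_rotpow hm hn hs]; exact hsr⟩)]
  refine Finset.sum_congr rfl fun j hj => ?_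
  rw [Finset.sum_congr rfl (fun i hi => show
      (if k ||| (2 ^ i * s % n) = 2 ^ i * s % n ∧ k ≠ 2 ^ i * s % n then
          β ^ (2 ^ i * s % n - k) * a ^ 2 ^ i else 0)
        = (if k ||| j = j ∧ k ≠ j then β ^ (j - k) * a ^ 2 ^ i else 0) by
    rw [(Finset.mem_filter.mp hi).2])]
  by_cases hc : k ||| j = j ∧ k ≠ j
  · rw [if_pos hc, Finset.sum_mul]
    refine Finset.sum_congr rfl fun i _ => ?_
    rw [if_pos hc]
    ring
  · rw [if_neg hc]
    simp only [if_neg hc, Finset.sum_const_zero]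

end Fin

end CDD

theorem cyclicDD_of_RM (m : ℕ) (hm : 0 < m)
    (n : ℕ) (hn : n = 2 ^ m - 1)
    {F : Type*} [Field F] [Fintype F] (hF : Fintype.card F = 2 ^ m)
    (r : ℕ) (hr1 : 1 ≤ r) (hr2 : r + 1 ≤ m) :
    (∀ β : F, β ≠ 0 →
      derivSet β (extCyclicCode n ((Finset.range n).filter fun j => wtm m j ≤ r))
          ⊆ (extCyclicCode n ((Finset.range n).filter fun j => wtm m j ≤ r - 1) :
              Set (F → F)) ∧
      ∀ S' : Finset ℕ, IsExpSet n S' →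
        derivSet β (extCyclicCode n ((Finset.range n).filter fun j => wtm m j ≤ r))
            ⊆ (extCyclicCode n S' : Set (F → F)) →
        (extCyclicCode n ((Finset.range n).filter fun j => wtm m j ≤ r - 1) :
            Set (F → F)) ⊆ extCyclicCode n S') ∧
    (crSet n m ((Finset.range n).filter fun j => wtm m j ≤ r)).biUnion
        (fun s => ccSet n m (Pset s))
      = (Finset.range n).filter fun j => wtm m j ≤ r - 1 := by
  classical
  have hm2 : 2 ≤ m := by omega
  have h2m : (2:ℕ) ^ 2 ≤ 2 ^ m := Nat.pow_le_pow_right (by norm_num) hm2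
  have hnpos : 0 < n := by omega
  have hn2m : n < 2 ^ m := by omega
  haveI hchar : CharP F 2 := CDD.charP_two hm hF
  haveI : Fact (Nat.Prime 2) := ⟨Nat.prime_two⟩
  refine ⟨fun β hβ => ⟨?_, ?_⟩, ?_⟩
  · -- Part 1a : derivatives of RM(r) lie in RM(r-1)
    rintro d ⟨c, hcC, rfl⟩
    obtain ⟨A, hA, hrepr⟩ := hcC
    have hβn : β ^ n = 1 := CDD.beta_pow_n hn hF hβ
    refine ⟨fun k => ∑ j ∈ (Finset.range n).filter (fun j => wtm m j ≤ r),
        if k ||| j = j ∧ k ≠ j then A j * β ^ (j - k) else 0, ?_, ?_⟩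
    · intro k hk
      have hkn : k < n := Finset.mem_range.mp (Finset.mem_filter.mp hk).1
      exact CDD.deriv_constraint hm2 hn r A hβn hA hkn
    · intro x
      show c (x + β) - c x = _
      rw [hrepr (x + β), hrepr x]
      exact CDD.deriv_repr hm hn r A β x
  · -- Part 1b : minimality
    intro S' hS' hsub
    have hSr'sub : ∀ k ∈ (Finset.range n).filter (fun j => wtm m j ≤ r - 1), k ∈ S' := by
      intro k hk
      by_contra hknot
      obtain ⟨hkn', hkw⟩ := Finset.mem_filter.mp hk
      have hkn : k < n := Finset.mem_range.mp hkn'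
      have hk2m : k < 2 ^ m := by omega
      have hwlt : wtm m k < m := by omega
      obtain ⟨b, hbm, hbk⟩ := CDD.exists_unset_bit hwlt
      have hbnot : b ∉ CDD.bitsF m k := by
        simp [CDD.bitsF, hbk]
      have hWsub : insert b (CDD.bitsF m k) ⊆ Finset.range m := by
        intro i hi
        rcases Finset.mem_insert.mp hi with h | h
        · subst h; exact Finset.mem_range.mpr hbm
        · exact (Finset.mem_filter.mp h).1
      set s : ℕ := CDD.sig (insert b (CDD.bitsF m k)) with hsdef
      have hsk : s = 2 ^ b + k := by
        rw [hsdef, CDD.sig, Finset.sum_insert hbnot, ← CDD.sig, CDD.sig_bitsF hk2m]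
      have hbits : CDD.bitsF m s = insert b (CDD.bitsF m k) := CDD.bitsF_sig hWsub
      have hwts : wtm m s = wtm m k + 1 := by
        show (CDD.bitsF m s).card = (CDD.bitsF m k).card + 1
        rw [hbits, Finset.card_insert_of_notMem hbnot]
      have hs2m : s < 2 ^ m := CDD.sig_lt hWsub
      have hsne : s ≠ 2 ^ m - 1 := by
        intro h
        have hall := CDD.wtm_all_ones m
        rw [← h] at hall
        omega
      have hsn : s < n := by omega
      have hwsr : wtm m s ≤ r := by omega
      have hks : k ||| s = s := by
        rw [CDD.or_eq_iff]
        intro i hi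
        have him : i < m := by
          by_contra hcon
          rw [CDD.testBit_ge hk2m (by omega)] at hi
          exact absurd hi (by simp)
        rw [hsdef, CDD.sig_testBit hWsub]
        have : i ∈ insert b (CDD.bitsF m k) :=
          Finset.mem_insert.mpr (Or.inr (Finset.mem_filter.mpr
            ⟨Finset.mem_range.mpr him, hi⟩))
        simpa using this
      have hb0 := Nat.two_pow_pos b
      have hkns : k ≠ s := by omega
      -- the family of codewords and their derivatives
      have hs0 : 2 ^ 0 * s % n = s := by
        rw [pow_zero, one_mul]; exact Nat.mod_eq_of_lt hsn
      have hB0 : ∀ a : F, (∑ i ∈ Finset.range m,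
          if k ||| (2 ^ i * s % n) = 2 ^ i * s % n ∧ k ≠ 2 ^ i * s % n then
            β ^ (2 ^ i * s % n - k) * a ^ 2 ^ i else 0) = 0 := by
        intro a
        have hder : (fun x : F =>
            (∑ u ∈ (Finset.range n).filter (fun j => wtm m j ≤ r),
              (∑ i ∈ (Finset.range m).filter (fun i => 2 ^ i * s % n = u), a ^ 2 ^ i)
                * (x + β) ^ u)
            - ∑ u ∈ (Finset.range n).filter (fun j => wtm m j ≤ r),
              (∑ i ∈ (Finset.range m).filter (fun i => 2 ^ i * s % n = u), a ^ 2 ^ i)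
                * x ^ u) ∈ (extCyclicCode n S' : Set (F → F)) := by
          apply hsub
          refine ⟨fun x => ∑ u ∈ (Finset.range n).filter (fun j => wtm m j ≤ r),
              (∑ i ∈ (Finset.range m).filter (fun i => 2 ^ i * s % n = u), a ^ 2 ^ i)
                * x ^ u,
            ⟨fun t => ∑ i ∈ (Finset.range m).filter (fun i => 2 ^ i * s % n = t), a ^ 2 ^ i,
              ?_, fun x => rfl⟩, rfl⟩
          intro u hu
          show (∑ i ∈ (Finset.range m).filter (fun i => 2 ^ i * s % n = 2 * u % n),
                a ^ 2 ^ i)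
              = (∑ i ∈ (Finset.range m).filter (fun i => 2 ^ i * s % n = u), a ^ 2 ^ i) ^ 2
          rw [Finset.sum_filter, Finset.sum_filter]
          exact CDD.Afam_constraint hm2 hn hF hsn a
            (Finset.mem_range.mp (Finset.mem_filter.mp hu).1)
        obtain ⟨A'', hA''c, hA''r⟩ := hder
        rw [← CDD.Bfam_collapse hm hn hsn hwsr a β k]
        exact CDD.coeff_unique hF
          (S := S') (T := (Finset.range n).filter (fun j => wtm m j ≤ r - 1))
          (fun j hj => by have := hS'.1 j hj; omega)
          (fun j hj => by
            have := Finset.mem_range.mp (Finset.mem_filter.mp hj).1; omega)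
          A''
          (fun k' => ∑ j ∈ (Finset.range n).filter (fun j => wtm m j ≤ r),
            if k' ||| j = j ∧ k' ≠ j then
              (∑ i ∈ (Finset.range m).filter (fun i => 2 ^ i * s % n = j), a ^ 2 ^ i)
                * β ^ (j - k')
            else 0)
          (fun x => (hA''r x).symm.trans (CDD.deriv_repr hm hn r
            (fun t => ∑ i ∈ (Finset.range m).filter (fun i => 2 ^ i * s % n = t), a ^ 2 ^ i)
            β x))
          hk hknot
      obtain ⟨a, ha⟩ := CDD.exists_nonzero_eval hm hF
        (fun i => β ^ (2 ^ i * s % n - k))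
        (fun i => k ||| (2 ^ i * s % n) = 2 ^ i * s % n ∧ k ≠ 2 ^ i * s % n)
        (by
          show k ||| (2 ^ 0 * s % n) = 2 ^ 0 * s % n ∧ k ≠ 2 ^ 0 * s % n
          rw [hs0]; exact ⟨hks, hkns⟩)
        (by
          show β ^ (2 ^ 0 * s % n - k) ≠ 0
          rw [hs0]; exact pow_ne_zero _ hβ)
      exact ha (hB0 a)
    -- now the inclusion of codes
    intro c hc
    obtain ⟨A, hA, hrepr⟩ := hc
    refine ⟨fun j => if j ∈ (Finset.range n).filter (fun j => wtm m j ≤ r - 1)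
        then A j else 0, ?_, ?_⟩
    · intro j hjS'
      have hjn : j < n := hS'.1 j hjS'
      show (if 2 * j % n ∈ (Finset.range n).filter (fun j => wtm m j ≤ r - 1)
            then A (2 * j % n) else 0)
          = (if j ∈ (Finset.range n).filter (fun j => wtm m j ≤ r - 1) then A j else 0) ^ 2
      by_cases hj : j ∈ (Finset.range n).filter (fun j => wtm m j ≤ r - 1)
      · rw [if_pos hj]
        have hdj : 2 * j % n ∈ (Finset.range n).filter (fun j => wtm m j ≤ r - 1) := by
          obtain ⟨h1, h2⟩ := Finset.mem_filter.mp hj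
          exact Finset.mem_filter.mpr ⟨Finset.mem_range.mpr (CDD.dbl_lt hm hn j),
            by rw [CDD.wtm_dbl hm hn hjn]; exact h2⟩
        rw [if_pos hdj]
        exact hA j hj
      · rw [if_neg hj]
        have hdj : 2 * j % n ∉ (Finset.range n).filter (fun j => wtm m j ≤ r - 1) := by
          intro hmem
          apply hj
          obtain ⟨h1, h2⟩ := Finset.mem_filter.mp hmem
          refine Finset.mem_filter.mpr ⟨Finset.mem_range.mpr hjn, ?_⟩
          rw [← CDD.wtm_dbl hm hn hjn]
          exact h2
        rw [if_neg hdj]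
        exact (zero_pow (by norm_num)).symm
    · intro x
      calc c x = ∑ j ∈ (Finset.range n).filter (fun j => wtm m j ≤ r - 1), A j * x ^ j :=
            hrepr x
        _ = ∑ j ∈ (Finset.range n).filter (fun j => wtm m j ≤ r - 1),
              (if j ∈ (Finset.range n).filter (fun j => wtm m j ≤ r - 1)
                then A j else 0) * x ^ j :=
            Finset.sum_congr rfl fun j hj => by rw [if_pos hj]
        _ = ∑ j ∈ S',
              (if j ∈ (Finset.range n).filter (fun j => wtm m j ≤ r - 1)
                then A j else 0) * x ^ j :=
            Finset.sum_subset (fun k hk => hSr'sub k hk)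
              (fun j _ hjnot => by rw [if_neg hjnot, zero_mul])
  · -- Part 2 : the combinatorial identity
    ext j
    constructor
    · intro hj
      obtain ⟨s, hscr, hjcc⟩ := Finset.mem_biUnion.mp hj
      obtain ⟨hscc, hmin⟩ := Finset.mem_filter.mp hscr
      obtain ⟨s₀, hs₀, hscyc⟩ := Finset.mem_biUnion.mp hscc
      obtain ⟨hs₀n', hs₀w⟩ := Finset.mem_filter.mp hs₀
      have hs₀n : s₀ < n := Finset.mem_range.mp hs₀n'
      obtain ⟨i₀, hi₀, hseq⟩ := Finset.mem_image.mp hscyc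
      have hsn : s < n := by rw [← hseq]; exact CDD.rotpow_lt hm hn _ _
      have hsw : wtm m s ≤ r := by
        rw [← hseq, CDD.wtm_rotpow hm hn hs₀n]; exact hs₀w
      obtain ⟨kk, hkkP, hjc⟩ := Finset.mem_biUnion.mp hjcc
      simp only [Pset, Finset.mem_filter, Finset.mem_range] at hkkP
      obtain ⟨hkkr, hkkor, hkkne⟩ := hkkP
      have hkkn : kk < n := by omega
      have hkk2m : kk < 2 ^ m := by omega
      have hs2m : s < 2 ^ m := by omega
      have hwkk : wtm m kk < wtm m s := CDD.wtm_lt_of_proper hkk2m hs2m hkkor hkkne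
      obtain ⟨i, hi, hjeq⟩ := Finset.mem_image.mp hjc
      have hjn : j < n := by rw [← hjeq]; exact CDD.rotpow_lt hm hn _ _
      have hjw : wtm m j = wtm m kk := by
        rw [← hjeq]; exact CDD.wtm_rotpow hm hn hkkn _
      exact Finset.mem_filter.mpr ⟨Finset.mem_range.mpr hjn, by omega⟩
    · intro hj
      obtain ⟨hjn', hjw⟩ := Finset.mem_filter.mp hj
      have hjn : j < n := Finset.mem_range.mp hjn'
      have hj2m : j < 2 ^ m := by omega
      have hwlt : wtm m j < m := by omega
      obtain ⟨b, hbm, hbj⟩ := CDD.exists_unset_bit hwlt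
      have hbnot : b ∉ CDD.bitsF m j := by
        simp [CDD.bitsF, hbj]
      have hWsub : insert b (CDD.bitsF m j) ⊆ Finset.range m := by
        intro i hi
        rcases Finset.mem_insert.mp hi with h | h
        · subst h; exact Finset.mem_range.mpr hbm
        · exact (Finset.mem_filter.mp h).1
      set s₀ : ℕ := CDD.sig (insert b (CDD.bitsF m j)) with hs₀def
      have hs₀k : s₀ = 2 ^ b + j := by
        rw [hs₀def, CDD.sig, Finset.sum_insert hbnot, ← CDD.sig, CDD.sig_bitsF hj2m]
      have hbits : CDD.bitsF m s₀ = insert b (CDD.bitsF m j) := CDD.bitsF_sig hWsub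
      have hwts : wtm m s₀ = wtm m j + 1 := by
        show (CDD.bitsF m s₀).card = (CDD.bitsF m j).card + 1
        rw [hbits, Finset.card_insert_of_notMem hbnot]
      have hs₀2m : s₀ < 2 ^ m := CDD.sig_lt hWsub
      have hs₀ne : s₀ ≠ 2 ^ m - 1 := by
        intro h
        have hall := CDD.wtm_all_ones m
        rw [← h] at hall
        omega
      have hs₀n : s₀ < n := by omega
      have hws₀r : wtm m s₀ ≤ r := by omega
      have hjors₀ : j ||| s₀ = s₀ := by
        rw [CDD.or_eq_iff]
        intro i hi
        have him : i < m := by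
          by_contra hcon
          rw [CDD.testBit_ge hj2m (by omega)] at hi
          exact absurd hi (by simp)
        rw [hs₀def, CDD.sig_testBit hWsub]
        have : i ∈ insert b (CDD.bitsF m j) :=
          Finset.mem_insert.mpr (Or.inr (Finset.mem_filter.mpr
            ⟨Finset.mem_range.mpr him, hi⟩))
        simpa using this
      have hb0 := Nat.two_pow_pos b
      have hjs₀ne : j ≠ s₀ := by omega
      have hs₀Sr : s₀ ∈ (Finset.range n).filter (fun j => wtm m j ≤ r) :=
        Finset.mem_filter.mpr ⟨Finset.mem_range.mpr hs₀n, hws₀r⟩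
      have hCCne : (cycCoset n m s₀).Nonempty := by
        refine ⟨s₀, ?_⟩
        rw [cycCoset, Finset.mem_image]
        exact ⟨0, Finset.mem_range.mpr hm, by simp [Nat.mod_eq_of_lt hs₀n]⟩
      set s := (cycCoset n m s₀).min' hCCne with hsmin
      have hsmem : s ∈ cycCoset n m s₀ := Finset.min'_mem _ _
      have hceq : cycCoset n m s = cycCoset n m s₀ := CDD.cyc_eq hm hn hs₀n hsmem
      obtain ⟨i, hi, hseq⟩ := Finset.mem_image.mp hsmem
      have hsn : s < n := by rw [← hseq]; exact CDD.rotpow_lt hm hn _ _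
      refine Finset.mem_biUnion.mpr ⟨s, ?_, ?_⟩
      · refine Finset.mem_filter.mpr ⟨?_, ?_⟩
        · exact Finset.mem_biUnion.mpr ⟨s₀, hs₀Sr, hsmem⟩
        · intro t ht
          rw [hceq] at ht
          exact Finset.min'_le _ _ ht
      · have hkkor : (2 ^ i * j % n) ||| s = s := by
          rw [← hseq]
          exact CDD.or_rotpow hm hn hjn hs₀n hjors₀ i
        have hkkn : 2 ^ i * j % n < n := CDD.rotpow_lt hm hn _ _
        have hkkne : 2 ^ i * j % n ≠ s := by
          intro h
          exact hjs₀ne (CDD.rotpow_inj hm hn hjn hs₀n i (h.trans hseq.symm))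
        have hkkP : 2 ^ i * j % n ∈ Pset s := by
          rw [Pset, Finset.mem_filter, Finset.mem_range]
          exact ⟨by have := CDD.or_le hkkor; omega, hkkor, hkkne⟩
        refine Finset.mem_biUnion.mpr ⟨2 ^ i * j % n, hkkP, ?_⟩
        exact CDD.mem_cyc_symm hm hn hjn (by
          rw [cycCoset, Finset.mem_image]
          exact ⟨i, hi, rfl⟩)
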